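/- Let C(r) be the Cauchy matrix with entries C(r)_{mn} = 1/(e^{r_m} - e^{-r_n}) and ζ = (1,...,1)^t. Then the m-th component of C(r)^{-1}ζ equals (e^{r_m} - e^{-r_m}) · ∏_{n≠m} (e^{-r_m} - e^{r_n})/(e^{-r_m} - e^{-r_n}). -/

import Mathlib

open Finset Complex Matrix Polynomial

private lemma poly_vanish {N : ℕ} (f : Fin N → ℂ) (hf : Function.Injective f)
    (P : ℂ[X]) (hdeg : P.degree < (N : ℕ)) (heval : ∀ i, P.eval (f i) = 0) : P = 0 := by
  by_cases hP : P = 0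
  · exact hP
  · refine Polynomial.eq_zero_of_natDegree_lt_card_of_eval_eq_zero P hf heval ?_
    rw [Fintype.card_fin]
    exact (Polynomial.natDegree_lt_iff_degree_lt hP).mpr (by exact_mod_cast hdeg)

private lemma degree_prod_lin {N : ℕ} (s : Finset (Fin N)) (a : Fin N → ℂ) :
    (∏ n ∈ s, (X - Polynomial.C (a n))).degree = (s.card : WithBot ℕ) := by
  rw [Polynomial.degree_prod]
  simp [Polynomial.degree_X_sub_C]

theorem cauchy_inverse_apply_one (N : ℕ) (r : Fin N → ℂ)
    (him : ∀ n, (r n).im ∈ Set.Ioo (-Real.pi) 0 ∪ Set.Ioo 0 Real.pi)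
    (hr : ∀ m n, m ≠ n → exp (r m) ≠ exp (r n) ∧ exp (r m) ≠ exp (-r n))
    (C : Matrix (Fin N) (Fin N) ℂ)
    (hC : ∀ m n, C m n = 1 / (exp (r m) - exp (-r n))) :
    ∀ m, (C⁻¹ *ᵥ fun _ => (1 : ℂ)) m =
      (exp (r m) - exp (-r m)) *
        ∏ n ∈ Finset.univ.erase m,
          (exp (-r m) - exp (r n)) / (exp (-r m) - exp (-r n)) := by
  set x : Fin N → ℂ := fun n => exp (r n) with hx
  set y : Fin N → ℂ := fun n => exp (-r n) with hy
  have hxy : ∀ k m, x k ≠ y m := by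
    intro k m
    rcases eq_or_ne k m with rfl | hkm
    · intro h
      have h' : exp (r k) = exp (-r k) := h
      have h1 : exp (r k + r k) = 1 := by
        rw [Complex.exp_add]
        nth_rewrite 2 [h']
        rw [← Complex.exp_add]
        simp
      rw [Complex.exp_eq_one_iff] at h1
      obtain ⟨n, hn⟩ := h1
      have him2 : (r k).im + (r k).im = (n : ℝ) * (2 * Real.pi) := by
        have := congrArg Complex.im hn
        simp [Complex.add_im, Complex.mul_im, Complex.I_im, Complex.I_re] at this
        rw [this]
      have hpi := Real.pi_pos
      rcases him k with h2 | h2 <;> simp only [Set.mem_Ioo] at h2 <;>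
        · rcases lt_trichotomy n 0 with hn0 | hn0 | hn0
          · have hle : (n : ℝ) ≤ -1 := by exact_mod_cast (by omega : n ≤ -1)
            nlinarith
          · subst hn0; simp at him2; nlinarith
          · have hle : (1 : ℝ) ≤ (n : ℝ) := by exact_mod_cast (by omega : 1 ≤ n)
            nlinarith
    · exact (hr k m hkm).2
  have hxinj : Function.Injective x := by
    intro a b hab
    by_contra hne
    exact (hr a b hne).1 hab
  have hyinj : Function.Injective y := by
    intro a b hab
    have hab' : exp (-r a) = exp (-r b) := hab
    have hxx : exp (r a) = exp (r b) := by
      have := congrArg (·⁻¹) hab'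
      simpa [← Complex.exp_neg] using this
    exact hxinj hxx
  have hyy : ∀ m n, m ≠ n → y m - y n ≠ 0 := fun m n h => sub_ne_zero.mpr (fun e => h (hyinj e))
  set v : Fin N → ℂ := fun m =>
    -(∏ n, (y m - x n)) / ∏ n ∈ Finset.univ.erase m, (y m - y n) with hv
  have hvden : ∀ m, (∏ n ∈ Finset.univ.erase m, (y m - y n)) ≠ 0 := by
    intro m
    exact Finset.prod_ne_zero_iff.mpr fun n hn => hyy m n (Finset.ne_of_mem_erase hn).symm
  have key : ∀ k, ∑ m, v m / (x k - y m) = 1 := by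
    intro k
    set Q1 : ℂ[X] := ∏ n, (X - Polynomial.C (y n)) with hQ1
    set Q2 : ℂ[X] := ∏ n, (X - Polynomial.C (x n)) with hQ2
    set S : ℂ[X] := ∑ m, Polynomial.C (v m) * ∏ n ∈ Finset.univ.erase m, (X - Polynomial.C (y n))
      with hS
    have hN : 0 < N := k.pos
    have hQ1d : Q1.degree = (N : ℕ) := by simpa using degree_prod_lin Finset.univ y
    have hQ2d : Q2.degree = (N : ℕ) := by simpa using degree_prod_lin Finset.univ x
    have hQ1m : Q1.Monic := monic_prod_of_monic _ _ fun n _ => monic_X_sub_C _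
    have hQ2m : Q2.Monic := monic_prod_of_monic _ _ fun n _ => monic_X_sub_C _
    have hsub : (Q1 - Q2).degree < (N : ℕ) := by
      rcases eq_or_ne Q1 Q2 with h | h
      · simp only [h, sub_self, Polynomial.degree_zero]
        exact WithBot.bot_lt_coe _
      · calc (Q1 - Q2).degree < Q1.degree :=
              Polynomial.degree_sub_lt (hQ1d.trans hQ2d.symm) hQ1m.ne_zero
                (hQ1m.leadingCoeff.trans hQ2m.leadingCoeff.symm)
          _ = (N : ℕ) := hQ1d
    have hSd : S.degree < (N : ℕ) := by
      refine lt_of_le_of_lt (Polynomial.degree_sum_le _ _) ?_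
      rw [Finset.sup_lt_iff (by exact_mod_cast WithBot.bot_lt_coe N)]
      intro m _
      refine lt_of_le_of_lt (Polynomial.degree_mul_le _ _) ?_
      have h1 : (∏ n ∈ Finset.univ.erase m, (X - Polynomial.C (y n))).degree
          = ((N - 1 : ℕ) : WithBot ℕ) := by
        rw [degree_prod_lin]
        congr 1
        simp [Finset.card_erase_of_mem]
      rw [h1]
      calc Polynomial.degree (Polynomial.C (v m)) + ((N - 1 : ℕ) : WithBot ℕ)
          ≤ 0 + ((N - 1 : ℕ) : WithBot ℕ) := add_le_add_left (Polynomial.degree_C_le) _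
        _ = ((N - 1 : ℕ) : WithBot ℕ) := by rw [zero_add]
        _ < (N : ℕ) := by exact_mod_cast Nat.sub_lt hN one_pos
    have hP : Q1 - Q2 - S = 0 := by
      refine poly_vanish y hyinj _ ?_ ?_
      · calc (Q1 - Q2 - S).degree ≤ max (Q1 - Q2).degree S.degree :=
              Polynomial.degree_sub_le _ _
          _ < (N : ℕ) := max_lt hsub hSd
      · intro j
        have e1 : Q1.eval (y j) = 0 := by
          rw [hQ1, Polynomial.eval_prod]
          exact Finset.prod_eq_zero (Finset.mem_univ j) (by simp)
        have e3 : S.eval (y j) = v j * ∏ n ∈ Finset.univ.erase j, (y j - y n) := by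
          rw [hS, Polynomial.eval_finset_sum]
          rw [Finset.sum_eq_single j]
          · simp [Polynomial.eval_prod]
          · intro m _ hm
            have h0 : (∏ n ∈ Finset.univ.erase m, (X - Polynomial.C (y n))).eval (y j) = 0 := by
              rw [Polynomial.eval_prod]
              exact Finset.prod_eq_zero (Finset.mem_erase.mpr ⟨hm.symm, Finset.mem_univ j⟩)
                (by simp)
            simp [h0]
          · simp
        have e4 : v j * ∏ n ∈ Finset.univ.erase j, (y j - y n) = -(∏ n, (y j - x n)) := by
          show -(∏ n, (y j - x n)) / (∏ n ∈ Finset.univ.erase j, (y j - y n))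
              * ∏ n ∈ Finset.univ.erase j, (y j - y n) = -(∏ n, (y j - x n))
          exact div_mul_cancel₀ _ (hvden j)
        have e2 : Q2.eval (y j) = ∏ n, (y j - x n) := by
          rw [hQ2, Polynomial.eval_prod]; simp
        simp [Polynomial.eval_sub, e1, e2, e3, e4]
    have hev : ∑ m, v m * ∏ n ∈ Finset.univ.erase m, (x k - y n) = ∏ n, (x k - y n) := by
      have hP' := congrArg (Polynomial.eval (x k)) hP
      simp only [Polynomial.eval_sub, Polynomial.eval_zero, hQ1, hQ2, hS,
        Polynomial.eval_prod, Polynomial.eval_finset_sum, Polynomial.eval_mul,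
        Polynomial.eval_C, Polynomial.eval_X] at hP'
      have e2 : (∏ n, (x k - x n)) = 0 :=
        Finset.prod_eq_zero (Finset.mem_univ k) (by simp)
      rw [e2] at hP'
      linear_combination -hP'
    have hprodne : (∏ n, (x k - y n)) ≠ 0 :=
      Finset.prod_ne_zero_iff.mpr fun n _ => sub_ne_zero.mpr (hxy k n)
    have hstep : ∑ m, v m / (x k - y m) = (∑ m, v m * ∏ n ∈ Finset.univ.erase m, (x k - y n))
        / ∏ n, (x k - y n) := by
      rw [Finset.sum_div]
      refine Finset.sum_congr rfl fun m _ => ?_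
      rw [← Finset.mul_prod_erase Finset.univ _ (Finset.mem_univ m)]
      rw [div_eq_div_iff (sub_ne_zero.mpr (hxy k m))
        (mul_ne_zero (sub_ne_zero.mpr (hxy k m))
          (Finset.prod_ne_zero_iff.mpr fun n hn => sub_ne_zero.mpr (hxy k n)))]
      ring
    rw [hstep, hev, div_self hprodne]
  have hCv : C *ᵥ v = fun _ => (1 : ℂ) := by
    funext k
    simp only [Matrix.mulVec, dotProduct]
    calc ∑ m, C k m * v m = ∑ m, v m / (x k - y m) := by
          refine Finset.sum_congr rfl fun m _ => ?_
          rw [hC k m]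
          field_simp
          rfl
      _ = 1 := key k
  have hdet : IsUnit C.det := by
    rw [isUnit_iff_ne_zero]
    intro h0
    obtain ⟨w, hw, hw0⟩ := (Matrix.exists_mulVec_eq_zero_iff (M := C)).mpr h0
    apply hw
    funext j
    show w j = 0
    set P : ℂ[X] := ∑ m, Polynomial.C (w m) * ∏ n ∈ Finset.univ.erase m, (X - Polynomial.C (y n))
      with hPdef
    have hN : 0 < N := j.pos
    have hPd : P.degree < (N : ℕ) := by
      refine lt_of_le_of_lt (Polynomial.degree_sum_le _ _) ?_
      rw [Finset.sup_lt_iff (by exact_mod_cast WithBot.bot_lt_coe N)]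
      intro m _
      refine lt_of_le_of_lt (Polynomial.degree_mul_le _ _) ?_
      have h1 : (∏ n ∈ Finset.univ.erase m, (X - Polynomial.C (y n))).degree
          = ((N - 1 : ℕ) : WithBot ℕ) := by
        rw [degree_prod_lin]; congr 1; simp [Finset.card_erase_of_mem]
      rw [h1]
      calc Polynomial.degree (Polynomial.C (w m)) + ((N - 1 : ℕ) : WithBot ℕ)
          ≤ 0 + ((N - 1 : ℕ) : WithBot ℕ) := add_le_add_left (Polynomial.degree_C_le) _
        _ = ((N - 1 : ℕ) : WithBot ℕ) := by rw [zero_add]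
        _ < (N : ℕ) := by exact_mod_cast Nat.sub_lt hN one_pos
    have hPzero : P = 0 := by
      refine poly_vanish x hxinj _ hPd ?_
      intro k
      have hk : (C *ᵥ w) k = 0 := by rw [hw0]; rfl
      simp only [Matrix.mulVec, dotProduct] at hk
      have hk' : ∑ m, w m / (x k - y m) = 0 := by
        rw [← hk]
        refine Finset.sum_congr rfl fun m _ => ?_
        rw [hC k m]; field_simp; rfl
      have he : P.eval (x k) = ∑ m, w m * ∏ n ∈ Finset.univ.erase m, (x k - y n) := by
        simp [hPdef, Polynomial.eval_finset_sum, Polynomial.eval_prod]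
      rw [he]
      have hsplit : ∑ m, w m * ∏ n ∈ Finset.univ.erase m, (x k - y n)
          = (∑ m, w m / (x k - y m)) * ∏ n, (x k - y n) := by
        rw [Finset.sum_mul]
        refine Finset.sum_congr rfl fun m _ => ?_
        have hd : x k - y m ≠ 0 := sub_ne_zero.mpr (hxy k m)
        rw [← Finset.mul_prod_erase Finset.univ _ (Finset.mem_univ m), div_mul_eq_mul_div,
          mul_comm (x k - y m) (∏ n ∈ Finset.univ.erase m, (x k - y n)), ← mul_assoc,
          mul_div_assoc, div_self hd, mul_one]
      rw [hsplit, hk', zero_mul]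
    have hPe := congrArg (Polynomial.eval (y j)) hPzero
    simp only [hPdef, Polynomial.eval_finset_sum, Polynomial.eval_mul, Polynomial.eval_C,
      Polynomial.eval_prod, Polynomial.eval_sub, Polynomial.eval_X, Polynomial.eval_zero] at hPe
    rw [Finset.sum_eq_single j] at hPe
    · exact (mul_eq_zero.mp hPe).resolve_right (hvden j)
    · intro m _ hm
      have h0 : (∏ n ∈ Finset.univ.erase m, (y j - y n)) = 0 :=
        Finset.prod_eq_zero (Finset.mem_erase.mpr ⟨hm.symm, Finset.mem_univ j⟩) (by simp)
      simp [h0]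
    · simp
  intro m
  have hfin : C⁻¹ *ᵥ (fun _ => (1 : ℂ)) = v := by
    rw [← hCv, Matrix.mulVec_mulVec, Matrix.nonsing_inv_mul C hdet, Matrix.one_mulVec]
  rw [hfin, hv]
  show -(∏ n, (y m - x n)) / ∏ n ∈ Finset.univ.erase m, (y m - y n)
      = (x m - y m) * ∏ n ∈ Finset.univ.erase m, (y m - x n) / (y m - y n)
  rw [← Finset.mul_prod_erase Finset.univ (fun n => y m - x n) (Finset.mem_univ m),
    Finset.prod_div_distrib]
  field_simp
  ring
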